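/- For a simple graph G with an edge ab where neither a nor b is looped, the pivot G^{ab} with labels of a and b swapped equals the triple local complement G*a*b*a. -/

import Mathlib

/-- The local complement `G * v`: interchange edges and non-edges within the
open neighborhood `N(v)` of `v`. -/
def localComplement {V : Type*} (G : SimpleGraph V) (v : V) : SimpleGraph V where
  Adj x y := x ≠ y ∧ Xor' (G.Adj x y) (G.Adj v x ∧ G.Adj v y)
  symm := by
    constructor
    intro x y h
    obtain ⟨hxy, hx⟩ := h
    refine ⟨hxy.symm, ?_⟩
    unfold Xor' at *
    simp only [xor_def] at *
    have h1 := G.adj_comm x y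
    tauto
  loopless := by constructor; intro x h; exact h.1 rfl

/-- Vertices `x` and `y` form a toggled pair for the pivot `G^{ab}`. -/
def pivotToggle {V : Type*} (G : SimpleGraph V) (a b x y : V) : Prop :=
  x ≠ a ∧ x ≠ b ∧ y ≠ a ∧ y ≠ b ∧
  (G.Adj a x ∨ G.Adj b x) ∧ (G.Adj a y ∨ G.Adj b y) ∧
  ¬((G.Adj a x ↔ G.Adj a y) ∧ (G.Adj b x ↔ G.Adj b y))

theorem pivotToggle_symm {V : Type*} (G : SimpleGraph V) (a b x y : V) :
    pivotToggle G a b x y ↔ pivotToggle G a b y x := by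
  unfold pivotToggle
  constructor <;>
    · rintro ⟨h1, h2, h3, h4, h5, h6, h7⟩
      exact ⟨h3, h4, h1, h2, h6, h5, fun ⟨p, q⟩ => h7 ⟨p.symm, q.symm⟩⟩

/-- The pivot `G^{ab}`: toggle all edges/non-edges between the three classes of
vertices adjacent to `a` only, to `b` only, and to both. -/
def pivot {V : Type*} (G : SimpleGraph V) (a b : V) : SimpleGraph V where
  Adj x y := x ≠ y ∧ Xor' (G.Adj x y) (pivotToggle G a b x y)
  symm := by
    constructor
    intro x y h
    obtain ⟨hxy, hx⟩ := h
    refine ⟨hxy.symm, ?_⟩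
    have ht := pivotToggle_symm G a b x y
    have ha := G.adj_comm x y
    unfold Xor' at *
    simp only [xor_def] at *
    tauto
  loopless := by constructor; intro x h; exact h.1 rfl

/-- `G_{ab}`: the graph `G` with the labels of the vertices `a` and `b` swapped. -/
def swapLabels {V : Type*} [DecidableEq V] (G : SimpleGraph V) (a b : V) : SimpleGraph V where
  Adj x y := G.Adj (Equiv.swap a b x) (Equiv.swap a b y)
  symm := ⟨fun _ _ h => G.symm.symm _ _ h⟩
  loopless := ⟨fun _ h => G.loopless.irrefl _ h⟩

set_option maxHeartbeats 1000000 in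
/-- For a simple graph `G` with an edge `ab` (no loops, since `G` is simple),
the pivot `G^{ab}` with the labels of `a` and `b` swapped equals the triple
local complement `G * a * b * a = ((G*a)*b)*a`. -/
theorem pivot_swap_eq_triple_localComplement {V : Type*} [DecidableEq V]
    (G : SimpleGraph V) (a b : V) (hab : G.Adj a b) :
    swapLabels (pivot G a b) a b =
      localComplement (localComplement (localComplement G a) b) a := by
  have hne : a ≠ b := hab.ne
  ext x y
  simp only [swapLabels, pivot, localComplement, pivotToggle, Xor', xor_def, ne_eq]
  have c1 := G.adj_comm x a
  have c2 := G.adj_comm x b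
  have c3 := G.adj_comm y a
  have c4 := G.adj_comm y b
  have c5 := G.adj_comm y x
  have c6 := G.adj_comm b a
  have la := G.loopless.irrefl a
  have lb := G.loopless.irrefl b
  by_cases hxa : x = a
  · by_cases hya : y = a
    · simp [hxa, hya]
    · by_cases hyb : y = b
      · simp only [hxa, hyb, Equiv.swap_apply_left, Equiv.swap_apply_right]
        simp [c6, la, lb, hab, hne, Ne.symm hne]
      · simp only [hxa, Equiv.swap_apply_left, Equiv.swap_apply_of_ne_of_ne hya hyb]
        simp only [c3, c4, c6, la, lb, hab, hne, Ne.symm hne, hya, Ne.symm hya, hyb,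
          Ne.symm hyb, not_false_eq_true, not_true, true_and, and_true, false_and, and_false,
          true_or, or_true, false_or, or_false, not_false_iff, iff_true, true_iff, iff_false,
          false_iff, not_not, eq_self_iff_true, if_true, and_self]
        by_cases p1 : G.Adj a y <;> by_cases p2 : G.Adj b y <;> simp [p1, p2]
  · by_cases hxb : x = b
    · by_cases hya : y = a
      · simp only [hxb, hya, Equiv.swap_apply_left, Equiv.swap_apply_right]
        simp [c6, la, lb, hab, hne, Ne.symm hne]
      · by_cases hyb : y = b
        · simp [hxb, hyb]
        · simp only [hxb, Equiv.swap_apply_right, Equiv.swap_apply_of_ne_of_ne hya hyb]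
          simp only [c3, c4, c6, la, lb, hab, hne, Ne.symm hne, hya, Ne.symm hya, hyb,
            Ne.symm hyb, not_false_eq_true, not_true, true_and, and_true, false_and, and_false,
            true_or, or_true, false_or, or_false, not_false_iff, iff_true, true_iff, iff_false,
            false_iff, not_not, eq_self_iff_true, if_true, and_self]
          by_cases p1 : G.Adj a y <;> by_cases p2 : G.Adj b y <;> simp [p1, p2]
    · by_cases hya : y = a
      · simp only [hya, Equiv.swap_apply_left, Equiv.swap_apply_of_ne_of_ne hxa hxb]
        simp only [c1, c2, c6, la, lb, hab, hne, Ne.symm hne, hxa, Ne.symm hxa, hxb,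
          Ne.symm hxb, not_false_eq_true, not_true, true_and, and_true, false_and, and_false,
          true_or, or_true, false_or, or_false, not_false_iff, iff_true, true_iff, iff_false,
          false_iff, not_not, eq_self_iff_true, if_true, and_self]
        by_cases p1 : G.Adj a x <;> by_cases p2 : G.Adj b x <;> simp [p1, p2]
      · by_cases hyb : y = b
        · simp only [hyb, Equiv.swap_apply_right, Equiv.swap_apply_of_ne_of_ne hxa hxb]
          simp only [c1, c2, c6, la, lb, hab, hne, Ne.symm hne, hxa, Ne.symm hxa, hxb,
            Ne.symm hxb, not_false_eq_true, not_true, true_and, and_true, false_and, and_false,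
            true_or, or_true, false_or, or_false, not_false_iff, iff_true, true_iff, iff_false,
            false_iff, not_not, eq_self_iff_true, if_true, and_self]
          by_cases p1 : G.Adj a x <;> by_cases p2 : G.Adj b x <;> simp [p1, p2]
        · simp only [Equiv.swap_apply_of_ne_of_ne hxa hxb, Equiv.swap_apply_of_ne_of_ne hya hyb]
          simp only [c1, c2, c3, c4, c5, c6, la, lb, hab, hne, Ne.symm hne, hxa, Ne.symm hxa,
            hxb, Ne.symm hxb, hya, Ne.symm hya, hyb, Ne.symm hyb, not_false_eq_true, not_true,
            true_and, and_true, false_and, and_false, true_or, or_true, false_or, or_false,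
            not_false_iff, iff_true, true_iff, iff_false, false_iff, not_not, eq_self_iff_true,
            if_true, and_self]
          by_cases p1 : G.Adj a x <;> by_cases p2 : G.Adj b x <;> by_cases p3 : G.Adj a y <;>
            by_cases p4 : G.Adj b y <;> by_cases p5 : G.Adj x y <;> simp [p1, p2, p3, p4, p5]
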